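/- Let ℓ and p be primes, let K be a finite extension of ℚ_p, and let L/K be a cyclic Galois extension whose degree is a power of ℓ, with Galois group G = Gal(L/K). Let D := ∩_k (L^×)^{ℓ^k} be the ℓ-divisible part of L^× (a G-stable subgroup). Then Ĥ^0(G, D) = 1 and Ĥ^{-1}(G, D) = 1; in particular every element of D fixed by G is the norm of an element of D. -/

import Mathlib

/-! ### Tate cohomology in degrees 0 and -1 (multiplicative coefficients) -/

section TateMul
variable {G M : Type} [Group G] [CommGroup M]

/-- The subgroup of `G`-invariant elements. -/
def mFixed (ρ : G → (M →* M)) : Subgroup M where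
  carrier := {x | ∀ g, ρ g x = x}
  one_mem' := fun g => map_one (ρ g)
  mul_mem' := fun {a b} ha hb g => by rw [map_mul, ha g, hb g]
  inv_mem' := fun {a} ha g => by rw [map_inv, ha g]

variable [Fintype G]

/-- The norm map `m ↦ ∏_{σ ∈ G} σ(m)`. -/
def mNorm (ρ : G → (M →* M)) : M →* M := ∏ g : G, ρ g

/-- The augmentation subgroup `I_G M`, generated by the elements `σ(m) * m⁻¹`. -/
def mAug (ρ : G → (M →* M)) : Subgroup M :=
  Subgroup.closure {x | ∃ g m, x = ρ g m * m⁻¹}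

/-- Tate cohomology `Ĥ⁰(G, M) = M^G / N_G(M)`. -/
def tateH0 (ρ : G → (M →* M)) : Type :=
  mFixed ρ ⧸ ((mNorm ρ).range.subgroupOf (mFixed ρ))

/-- Tate cohomology `Ĥ⁻¹(G, M) = ker N_G / I_G M`. -/
def tateHm1 (ρ : G → (M →* M)) : Type :=
  (mNorm ρ).ker ⧸ ((mAug ρ).subgroupOf (mNorm ρ).ker)

end TateMul

/-! ### The ℓ-adification `lim_k M/M^{ℓ^k}` of a commutative group `M` -/

section Adic
variable (ℓ : ℕ)

/-- The subgroup of `ℓ^k`-th powers. -/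
def powSub (M : Type) [CommGroup M] (k : ℕ) : Subgroup M :=
  (powMonoidHom (ℓ ^ k) : M →* M).range

lemma powSub_succ_le (M : Type) [CommGroup M] (k : ℕ) :
    powSub ℓ M (k + 1) ≤ powSub ℓ M k := by
  rintro x ⟨y, rfl⟩
  exact ⟨y ^ ℓ, by simp only [powMonoidHom_apply, ← pow_mul, ← pow_succ']⟩

/-- The transition maps of the inverse system `k ↦ M/M^{ℓ^k}`. -/
def adicTrans (M : Type) [CommGroup M] (k : ℕ) :
    (M ⧸ powSub ℓ M (k + 1)) →* (M ⧸ powSub ℓ M k) :=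
  QuotientGroup.map _ _ (MonoidHom.id M) (fun _ hx => powSub_succ_le ℓ M k hx)

/-- The ℓ-adification `lim_k M/M^{ℓ^k}` as a subgroup of the product. -/
def adicSub (M : Type) [CommGroup M] : Subgroup (∀ k, M ⧸ powSub ℓ M k) where
  carrier := {f | ∀ k, adicTrans ℓ M k (f (k + 1)) = f k}
  one_mem' := fun k => map_one _
  mul_mem' := fun {a b} ha hb k => by
    rw [Pi.mul_apply, Pi.mul_apply, map_mul, ha k, hb k]
  inv_mem' := fun {a} ha k => by
    rw [Pi.inv_apply, Pi.inv_apply, map_inv, ha k]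

/-- The ℓ-adification `lim_k M/M^{ℓ^k}` of a commutative group `M`. -/
abbrev Adic (M : Type) [CommGroup M] : Type := ↥(adicSub ℓ M)

lemma adic_prop {M : Type} [CommGroup M] (x : Adic ℓ M) (k : ℕ) :
    adicTrans ℓ M k (x.1 (k + 1)) = x.1 k := x.2 k

/-- The map on level-`k` quotients induced by a group homomorphism. -/
def levelMap {M N : Type} [CommGroup M] [CommGroup N] (f : M →* N) (k : ℕ) :
    (M ⧸ powSub ℓ M k) →* (N ⧸ powSub ℓ N k) :=
  QuotientGroup.map _ _ f (by
    rintro x ⟨y, rfl⟩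
    exact ⟨f y, by simp only [powMonoidHom_apply, map_pow]⟩)

lemma levelMap_trans {M N : Type} [CommGroup M] [CommGroup N] (f : M →* N) (k : ℕ)
    (x : M ⧸ powSub ℓ M (k + 1)) :
    adicTrans ℓ N k (levelMap ℓ f (k + 1) x) = levelMap ℓ f k (adicTrans ℓ M k x) := by
  refine QuotientGroup.induction_on x fun m => ?_
  rfl

/-- The map on ℓ-adifications induced by a group homomorphism. -/
def adicMap {M N : Type} [CommGroup M] [CommGroup N] (f : M →* N) :
    Adic ℓ M →* Adic ℓ N where
  toFun x := ⟨fun k => levelMap ℓ f k (x.1 k), fun k => by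
    rw [levelMap_trans]; exact congrArg _ (adic_prop ℓ x k)⟩
  map_one' := by
    apply Subtype.ext; funext k; exact map_one _
  map_mul' := fun a b => by
    apply Subtype.ext; funext k; exact map_mul _ _ _

/-- The canonical map `M → lim_k M/M^{ℓ^k}`. -/
def adicOf (M : Type) [CommGroup M] : M →* Adic ℓ M where
  toFun x := ⟨fun k => (x : M ⧸ powSub ℓ M k), fun k => rfl⟩
  map_one' := by apply Subtype.ext; funext k; rfl
  map_mul' := fun a b => by apply Subtype.ext; funext k; rfl

end Adic

/-- The action of a field automorphism on the unit group. -/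
def galUnits {K L : Type} [Field K] [Field L] [Algebra K L] (σ : L ≃ₐ[K] L) : Lˣ →* Lˣ :=
  Units.map (σ : L →* L)

/-- The `ℓ`-divisible part `⋂_k (L^×)^{ℓ^k}` of `L^×`. -/
def divPart (ℓ : ℕ) (L : Type) [Field L] : Subgroup Lˣ := ⨅ k : ℕ, powSub ℓ Lˣ k

lemma galUnits_divPart_mem (ℓ : ℕ) {K L : Type} [Field K] [Field L] [Algebra K L]
    (σ : L ≃ₐ[K] L) {x : Lˣ} (hx : x ∈ divPart ℓ L) : galUnits σ x ∈ divPart ℓ L := by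
  rw [divPart, Subgroup.mem_iInf] at hx ⊢
  intro k
  obtain ⟨y, hy⟩ := hx k
  exact ⟨galUnits σ y, by
    rw [powMonoidHom_apply] at hy ⊢
    rw [← map_pow, hy]⟩

/-- The action of the Galois group on the `ℓ`-divisible part of `L^×`. -/
def galDiv (ℓ : ℕ) {K L : Type} [Field K] [Field L] [Algebra K L] (σ : L ≃ₐ[K] L) :
    ↥(divPart ℓ L) →* ↥(divPart ℓ L) :=
  ((galUnits σ).domRestrict (divPart ℓ L)).codRestrict _
    (fun x => galUnits_divPart_mem ℓ σ x.2)


/-! ### Auxiliary results -/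

section PadicAux

open Polynomial

variable {p : ℕ} [Fact p.Prime]


lemma no_p_inv (L : Type) [Field L] [Algebra ℚ_[p] L]
    [Algebra ℤ_[p] L] [IsScalarTower ℤ_[p] ℚ_[p] L]
    {γ : L} (hγint : IsIntegral ℤ_[p] γ) (h1 : (p : L) * γ = 1) : False := by
  have hinj : Function.Injective (algebraMap ℚ_[p] L) := (algebraMap ℚ_[p] L).injective
  have hpL : (p : L) = algebraMap ℚ_[p] L (p : ℚ_[p]) := by
    rw [map_natCast]
  have hγ : γ = algebraMap ℚ_[p] L ((p : ℚ_[p])⁻¹) := by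
    rw [map_inv₀, ← hpL]
    exact (inv_eq_of_mul_eq_one_right h1).symm
  rw [hγ] at hγint
  have hint2 : IsIntegral ℤ_[p] ((p : ℚ_[p])⁻¹) := IsIntegral.tower_bot hinj hγint
  obtain ⟨y, hy⟩ := IsIntegrallyClosed.isIntegral_iff.mp hint2
  rw [PadicInt.algebraMap_apply] at hy
  have hp0 : (p : ℚ_[p]) ≠ 0 := Nat.cast_ne_zero.mpr (Fact.out : p.Prime).ne_zero
  have : ((p : ℤ_[p]) * y : ℤ_[p]) = 1 := by
    have h2 : (((p : ℤ_[p]) * y : ℤ_[p]) : ℚ_[p]) = ((1 : ℤ_[p]) : ℚ_[p]) := by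
      push_cast [hy]
      field_simp
    exact Subtype.coe_injective h2
  exact PadicInt.irreducible_p.not_isUnit (IsUnit.of_mul_eq_one _ this)

lemma key_contra (L : Type) [Field L] [Algebra ℚ_[p] L]
    [Algebra ℤ_[p] L] [IsScalarTower ℤ_[p] ℚ_[p] L]
    (A : Subalgebra ℤ_[p] L) (hAint : ∀ a ∈ A, IsIntegral ℤ_[p] a)
    {ℓ : ℕ} (hℓ : ℓ.Prime) (t' : ℕ) {ζ' : L} (hζ'A : ζ' ∈ A)
    (hprim : IsPrimitiveRoot ζ' (ℓ ^ (t' + 1)))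
    {α : L} (hαA : α ∈ A) (hcong : 1 - ζ' = (p : L) ^ 2 * α) : False := by
  classical
  haveI : CharZero L := charZero_of_injective_algebraMap (algebraMap ℚ_[p] L).injective
  haveI : Fact ℓ.Prime := ⟨hℓ⟩
  have hpos : 0 < ℓ ^ (t' + 1) := pow_pos hℓ.pos _
  haveI : NeZero (ℓ ^ (t' + 1)) := ⟨hpos.ne'⟩
  -- cyclotomic evaluation
  have hcyc := cyclotomic_eq_prod_X_sub_primitiveRoots hprim
  have heval : (ℓ : L) = ∏ μ ∈ primitiveRoots (ℓ ^ (t' + 1)) L, (1 - μ) := by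
    have h0 := congrArg (eval 1) hcyc
    rw [eval_one_cyclotomic_prime_pow, eval_prod] at h0
    simpa using h0
  -- factor each term
  have hfac : ∀ s : Finset L, (∀ μ ∈ s, μ ∈ primitiveRoots (ℓ ^ (t' + 1)) L) →
      ∃ g ∈ A, ∏ μ ∈ s, (1 - μ) = (1 - ζ') ^ s.card * g := by
    intro s
    induction s using Finset.induction_on with
    | empty => exact fun _ => ⟨1, A.one_mem, by simp⟩
    | insert μ s hμs ih =>
      intro hsub
      obtain ⟨g, hg, hgeq⟩ := ih fun ν hν => hsub ν (Finset.mem_insert_of_mem hν)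
      have hμprim : IsPrimitiveRoot μ (ℓ ^ (t' + 1)) :=
        (mem_primitiveRoots hpos).mp (hsub μ (Finset.mem_insert_self μ s))
      obtain ⟨i, hi, hiμ⟩ := hprim.eq_pow_of_pow_eq_one hμprim.pow_eq_one
      have hgeom : 1 - μ = (1 - ζ') * (∑ m ∈ Finset.range i, ζ' ^ m) := by
        have hgs := geom_sum_mul ζ' i
        rw [← hiμ]
        linear_combination hgs
      refine ⟨(∑ m ∈ Finset.range i, ζ' ^ m) * g,
        A.mul_mem (Subalgebra.sum_mem A fun m _ => A.pow_mem hζ'A m) hg, ?_⟩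
      rw [Finset.prod_insert hμs, hgeq, hgeom, Finset.card_insert_of_notMem hμs, pow_succ]
      ring
  obtain ⟨G, hG, hGeq⟩ := hfac _ (fun μ h => h)
  set c := (primitiveRoots (ℓ ^ (t' + 1)) L).card with hc
  have hcpos : 0 < c := by
    rw [hc, hprim.card_primitiveRoots]
    exact Nat.totient_pos.mpr hpos
  have hℓeq : (ℓ : L) = (p : L) ^ (2 * c) * (α ^ c * G) := by
    rw [heval, hGeq, hcong, mul_pow, ← pow_mul]
    ring
  have hp0 : (p : L) ≠ 0 := Nat.cast_ne_zero.mpr (Fact.out : p.Prime).ne_zero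
  -- in both cases, obtain 1 = p * β with β ∈ A
  have hfin : ∃ β ∈ A, (p : L) * β = 1 := by
    by_cases hcase : ℓ = p
    · -- ℓ = p
      subst hcase
      refine ⟨(ℓ : L) ^ (2 * c - 2) * (α ^ c * G),
        A.mul_mem (A.pow_mem (A.natCast_mem ℓ) _) (A.mul_mem (A.pow_mem hαA c) hG), ?_⟩
      apply mul_left_cancel₀ hp0
      rw [mul_one]
      have h2c : 2 * c = 1 + (1 + (2 * c - 2)) := by omega
      rw [h2c, pow_add, pow_add, pow_one] at hℓeq
      linear_combination -hℓeq
    · -- ℓ ≠ p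
      have hcop : Nat.Coprime ℓ (p ^ (2 * c)) :=
        Nat.Coprime.pow_right _ ((Nat.coprime_primes hℓ (Fact.out : p.Prime)).mpr hcase)
      obtain ⟨u, v, huv⟩ := Nat.isCoprime_iff_coprime.mpr hcop
      have hcast : (u : L) * (ℓ : L) + (v : L) * ((p : L) ^ (2 * c)) = 1 := by
        have := congrArg (fun z : ℤ => (z : L)) huv
        push_cast at this
        convert this using 2
      refine ⟨(p : L) ^ (2 * c - 1) * ((u : L) * (α ^ c * G) + (v : L)),
        A.mul_mem (A.pow_mem (A.natCast_mem p) _)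
          (A.add_mem (A.mul_mem (A.intCast_mem u) (A.mul_mem (A.pow_mem hαA c) hG))
            (A.intCast_mem v)), ?_⟩
      have hsplit : (p : L) * (p : L) ^ (2 * c - 1) = (p : L) ^ (2 * c) := by
        rw [← pow_succ']
        congr 1
        omega
      calc (p : L) * ((p : L) ^ (2 * c - 1) * ((u : L) * (α ^ c * G) + (v : L)))
          = (u : L) * ((p : L) ^ (2 * c) * (α ^ c * G)) + (v : L) * (p : L) ^ (2 * c) := by
            rw [← hsplit]; ring
        _ = (u : L) * (ℓ : L) + (v : L) * (p : L) ^ (2 * c) := by rw [← hℓeq]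
        _ = 1 := hcast
  obtain ⟨β, hβA, hβ⟩ := hfin
  exact no_p_inv L (hAint β hβA) hβ


set_option synthInstance.maxHeartbeats 400000 in
set_option maxHeartbeats 1000000 in
lemma order_bound (ℓ : ℕ) (hℓ : ℓ.Prime) (L : Type) [Field L] [Algebra ℚ_[p] L]
    [FiniteDimensional ℚ_[p] L] (ζ : Lˣ) (j : ℕ) (hord : orderOf ζ = ℓ ^ j) :
    ℓ ^ j ≤ (p ^ 2) ^ Module.finrank ℚ_[p] L := by
  classical
  haveI : CharZero L := charZero_of_injective_algebraMap (algebraMap ℚ_[p] L).injective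
  letI : Algebra ℤ_[p] L := ((algebraMap ℚ_[p] L).comp (algebraMap ℤ_[p] ℚ_[p])).toAlgebra
  haveI : IsScalarTower ℤ_[p] ℚ_[p] L := IsScalarTower.of_algebraMap_eq fun x => rfl
  haveI : NoZeroSMulDivisors ℤ_[p] L := by
    suffices hinj' : Function.Injective (algebraMap ℤ_[p] L) from ⟨fun {c x} hcx => by
      rw [Algebra.smul_def, mul_eq_zero] at hcx
      exact hcx.imp_left fun h => hinj' (h.trans (map_zero _).symm)⟩
    have h : (algebraMap ℤ_[p] L) = (algebraMap ℚ_[p] L).comp (algebraMap ℤ_[p] ℚ_[p]) := rfl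
    rw [h]
    exact (algebraMap ℚ_[p] L).injective.comp fun a b hab => by
      apply Subtype.coe_injective
      rwa [PadicInt.algebraMap_apply, PadicInt.algebraMap_apply] at hab
  set n := Module.finrank ℚ_[p] L with hn
  set N := ℓ ^ j with hN
  have hNpos : 0 < N := pow_pos hℓ.pos j
  have hζN : ζ ^ N = 1 := by rw [← hord]; exact pow_orderOf_eq_one ζ
  set ζL : L := (ζ : L) with hζL
  have hζLN : ζL ^ N = 1 := by
    have := congrArg (Units.val) hζN
    simpa using this
  have hint : IsIntegral ℤ_[p] ζL :=
    ⟨X ^ N - C 1, monic_X_pow_sub_C 1 hNpos.ne', by simp [hζLN]⟩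
  set A := Algebra.adjoin ℤ_[p] ({ζL} : Set L) with hA
  have hζA : ζL ∈ A := Algebra.subset_adjoin (Set.mem_singleton ζL)
  set B := Algebra.adjoin.powerBasis' hint with hB
  haveI : Module.Finite ℤ_[p] ↥A := Module.Finite.of_basis B.basis
  have hdim : B.dim ≤ n := by
    have h1 : (minpoly ℚ_[p] ζL) = (minpoly ℤ_[p] ζL).map (algebraMap ℤ_[p] ℚ_[p]) :=
      minpoly.isIntegrallyClosed_eq_field_fractions' ℚ_[p] hint
    have h2 : B.dim = (minpoly ℤ_[p] ζL).natDegree := rfl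
    have h3 : (minpoly ℤ_[p] ζL).natDegree = (minpoly ℚ_[p] ζL).natDegree := by
      rw [h1, (minpoly.monic hint).natDegree_map]
    rw [h2, h3]
    exact minpoly.natDegree_le ζL
  haveI : NeZero (p ^ 2) := ⟨pow_ne_zero 2 (Fact.out : p.Prime).ne_zero⟩
  have hAint : ∀ a ∈ A, IsIntegral ℤ_[p] a := by
    intro a ha
    have h1 : IsIntegral ℤ_[p] (⟨a, ha⟩ : ↥A) := IsIntegral.of_finite ℤ_[p] _
    simpa using h1.map A.val
  have hmem : ∀ i : ℕ, ζL ^ i ∈ A := fun i => A.pow_mem hζA i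
  set e : ℕ → ↥A := fun i => ⟨ζL ^ i, hmem i⟩ with he
  set F : Fin N → (Fin B.dim → ZMod (p ^ 2)) :=
    fun i m => PadicInt.toZModPow 2 (B.basis.repr (e (i : ℕ)) m) with hF
  -- key contradiction for a congruence between distinct powers
  have hkey : ∀ u v : ℕ, u < v → v < N →
      (∃ w ∈ A, ζL ^ v - ζL ^ u = (p : L) ^ 2 * w) → False := by
    rintro u v huv hvN ⟨w, hwA, hw⟩
    set k := v - u with hk
    have hk0 : 0 < k := by omega
    have hkN : k < N := by omega
    set ζ'u := ζ ^ k with hζ'u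
    have hζ'ne : ζ'u ≠ 1 := by
      intro h
      have hdvd' : orderOf ζ ∣ k := orderOf_dvd_of_pow_eq_one h
      rw [hord] at hdvd'
      have := Nat.le_of_dvd hk0 hdvd'
      omega
    have hdvd : orderOf ζ'u ∣ ℓ ^ j := by
      apply orderOf_dvd_of_pow_eq_one
      rw [hζ'u, ← pow_mul, mul_comm, pow_mul, ← hN, hζN, one_pow]
    obtain ⟨t, htj, hordt⟩ := (Nat.dvd_prime_pow hℓ).mp hdvd
    have ht1 : t ≠ 0 := by
      rintro rfl
      rw [pow_zero] at hordt
      exact hζ'ne (orderOf_eq_one_iff.mp hordt)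
    obtain ⟨t', rfl⟩ : ∃ t', t = t' + 1 := ⟨t - 1, by omega⟩
    set ζ' : L := ((ζ'u : Lˣ) : L) with hζ'
    have hζ'pow : ζ' = ζL ^ k := by rw [hζ', hζ'u]; simp [hζL]
    have hζ'A : ζ' ∈ A := by rw [hζ'pow]; exact hmem k
    have hprim : IsPrimitiveRoot ζ' (ℓ ^ (t' + 1)) := by
      rw [hζ']
      exact IsPrimitiveRoot.coe_units_iff.mpr (hordt ▸ IsPrimitiveRoot.orderOf ζ'u)
    have hinv1 : ζL ^ (N - 1) * ζL = 1 := by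
      rw [← pow_succ]
      have : N - 1 + 1 = N := by omega
      rw [this, hζLN]
    have hα : ∃ α ∈ A, 1 - ζ' = (p : L) ^ 2 * α := by
      refine ⟨-((ζL ^ (N - 1)) ^ u * w),
        A.neg_mem (A.mul_mem (A.pow_mem (hmem (N - 1)) u) hwA), ?_⟩
      have hvuk : v = u + k := by omega
      rw [hvuk, pow_add] at hw
      have hcancel : (ζL ^ (N - 1)) ^ u * ζL ^ u = 1 := by
        rw [← mul_pow, hinv1, one_pow]
      calc 1 - ζ' = (ζL ^ (N - 1)) ^ u * ζL ^ u * (1 - ζL ^ k) := by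
            rw [hcancel, one_mul, hζ'pow]
        _ = -((ζL ^ (N - 1)) ^ u * (ζL ^ u * ζL ^ k - ζL ^ u)) := by ring
        _ = -((ζL ^ (N - 1)) ^ u * ((p : L) ^ 2 * w)) := by rw [hw]
        _ = (p : L) ^ 2 * -((ζL ^ (N - 1)) ^ u * w) := by ring
    obtain ⟨α, hαA, hcong⟩ := hα
    exact key_contra L A hAint hℓ t' hζ'A hprim hαA hcong
  have hdiff : ∀ u v : Fin N, F u = F v →
      ∃ w ∈ A, ζL ^ (u : ℕ) - ζL ^ (v : ℕ) = (p : L) ^ 2 * w := by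
    intro u v huv
    have hcoef : ∀ m : Fin B.dim, ∃ cc : ℤ_[p],
        B.basis.repr (e (u : ℕ) - e (v : ℕ)) m = (p : ℤ_[p]) ^ 2 * cc := by
      intro m
      have h0 : PadicInt.toZModPow 2 (B.basis.repr (e (u : ℕ) - e (v : ℕ)) m) = 0 := by
        have hre : B.basis.repr (e (u : ℕ) - e (v : ℕ)) m
            = B.basis.repr (e (u : ℕ)) m - B.basis.repr (e (v : ℕ)) m := by
          have hms := map_sub B.basis.repr (e (u : ℕ)) (e (v : ℕ))
          rw [hms, Finsupp.sub_apply]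
        have h2 : PadicInt.toZModPow 2 (B.basis.repr (e (u : ℕ)) m)
            = PadicInt.toZModPow 2 (B.basis.repr (e (v : ℕ)) m) := congrFun huv m
        rw [hre, map_sub, h2, sub_self]
      have h1 : B.basis.repr (e (u : ℕ) - e (v : ℕ)) m
          ∈ RingHom.ker (PadicInt.toZModPow (p := p) 2) := h0
      rw [PadicInt.ker_toZModPow, Ideal.mem_span_singleton] at h1
      obtain ⟨cc, hcc⟩ := h1
      exact ⟨cc, by rw [hcc]⟩
    choose cc hcc using hcoef
    refine ⟨((∑ m, cc m • B.basis m : ↥A) : L), SetLike.coe_mem _, ?_⟩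
    have hsum : e (u : ℕ) - e (v : ℕ) = ((p : ℤ_[p]) ^ 2) • (∑ m, cc m • B.basis m) := by
      conv_lhs => rw [← B.basis.sum_repr (e (u : ℕ) - e (v : ℕ))]
      rw [Finset.smul_sum]
      refine Finset.sum_congr rfl fun m _ => ?_
      rw [hcc m, mul_smul]
    have h3 := congrArg (fun z : ↥A => (z : L)) hsum
    simp only [AddSubgroupClass.coe_sub] at h3
    rw [Subalgebra.coe_smul] at h3
    rw [h3, Algebra.smul_def, map_pow, map_natCast]
  have hinj : Function.Injective F := by
    intro a b hab
    rcases lt_trichotomy (a : ℕ) (b : ℕ) with hlt | heq | hgt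
    · exact absurd (hdiff b a hab.symm) fun h => hkey (a : ℕ) (b : ℕ) hlt b.isLt h
    · exact Fin.ext heq
    · exact absurd (hdiff a b hab) fun h => hkey (b : ℕ) (a : ℕ) hgt a.isLt h
  have hcard := Fintype.card_le_of_injective F hinj
  rw [Fintype.card_fin, Fintype.card_fun, Fintype.card_fin, ZMod.card] at hcard
  calc ℓ ^ j = N := rfl
    _ ≤ (p ^ 2) ^ B.dim := hcard
    _ ≤ (p ^ 2) ^ n := Nat.pow_le_pow_right (Nat.one_le_pow _ _ (Fact.out : p.Prime).pos) hdim


end PadicAux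

section DivTorsion

variable {M : Type} [CommGroup M]

lemma iter_root_pred {P : M → Prop} {ℓ : ℕ}
    (hdiv : ∀ x, P x → ∃ y, P y ∧ y ^ ℓ = x) (m : ℕ) :
    ∀ x, P x → ∃ y, P y ∧ y ^ ℓ ^ m = x := by
  induction m with
  | zero => exact fun x hx => ⟨x, hx, pow_one x⟩
  | succ m ih =>
    intro x hx
    obtain ⟨y, hPy, hy⟩ := hdiv x hx
    obtain ⟨z, hPz, hz⟩ := ih y hPy
    exact ⟨z, hPz, by rw [pow_succ, pow_mul, hz, hy]⟩

/-- The `ℓ`-divisible part is `ℓ`-divisible. -/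
lemma divPart_div {ℓ : ℕ} (hℓ : ℓ.Prime) {L : Type} [Field L] {x : Lˣ}
    (hx : x ∈ divPart ℓ L) : ∃ y ∈ divPart ℓ L, y ^ ℓ = x := by
  classical
  have hxk : ∀ k, x ∈ powSub ℓ Lˣ k := Subgroup.mem_iInf.mp hx
  have hroot : ∀ k : ℕ, ∃ y : Lˣ, y ^ ℓ = x ∧ y ∈ powSub ℓ Lˣ k := by
    intro k
    obtain ⟨w, hw⟩ := hxk (k + 1)
    rw [powMonoidHom_apply] at hw
    refine ⟨w ^ ℓ ^ k, ?_, ⟨w, by rw [powMonoidHom_apply]⟩⟩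
    rw [← pow_mul, ← pow_succ, hw]
  -- the set of `ℓ`-th roots of `x` is finite
  haveI hfin : Finite {y : Lˣ // y ^ ℓ = x} := by
    have hpne : (Polynomial.X ^ ℓ - Polynomial.C (x : L)) ≠ 0 :=
      Polynomial.X_pow_sub_C_ne_zero hℓ.pos _
    have hfinset : Set.Finite {z : L | Polynomial.IsRoot (Polynomial.X ^ ℓ - Polynomial.C (x : L)) z} :=
      Polynomial.finite_setOf_isRoot hpne
    haveI := hfinset.to_subtype
    refine Finite.of_injective (fun y =>
      (⟨(y.1 : L), ?_⟩ : {z : L | Polynomial.IsRoot (Polynomial.X ^ ℓ - Polynomial.C (x : L)) z}))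
      ?_
    · have : ((y.1 : L)) ^ ℓ = (x : L) := by
        have := congrArg Units.val y.2
        simpa using this
      simp [Polynomial.IsRoot, this]
    · intro a b hab
      apply Subtype.ext
      apply Units.ext
      simpa using hab
  set g : ℕ → {y : Lˣ // y ^ ℓ = x} := fun k => ⟨(hroot k).choose, (hroot k).choose_spec.1⟩
    with hg
  have hgk : ∀ k, (g k : Lˣ) ∈ powSub ℓ Lˣ k := fun k => (hroot k).choose_spec.2
  obtain ⟨y, hy⟩ := Finite.exists_infinite_fiber g
  have hyinf : (g ⁻¹' {y}).Infinite := Set.infinite_coe_iff.mp hy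
  have hanti : ∀ {i j : ℕ}, i ≤ j → powSub ℓ Lˣ j ≤ powSub ℓ Lˣ i :=
    fun {i j} hij => antitone_nat_of_succ_le (powSub_succ_le ℓ Lˣ) hij
  refine ⟨y.1, ?_, y.2⟩
  rw [divPart, Subgroup.mem_iInf]
  intro k
  obtain ⟨k', hk', hkk'⟩ := hyinf.exists_gt k
  have : (g k' : Lˣ) ∈ powSub ℓ Lˣ k' := hgk k'
  rw [show g k' = y from hk'] at this
  exact hanti hkk'.le this

/-- The `ℓ`-divisible part of `L^×` is `ℓ`-torsion-free, for `L` finite over `ℚ_p`. -/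
lemma divPart_torsion_free (p : ℕ) [Fact p.Prime] {ℓ : ℕ} (hℓ : ℓ.Prime) {L : Type} [Field L]
    [Algebra ℚ_[p] L] [FiniteDimensional ℚ_[p] L] {x : Lˣ}
    (hx : x ∈ divPart ℓ L) (hxℓ : x ^ ℓ = 1) : x = 1 := by
  by_contra hx1
  have hxk : ∀ k, x ∈ powSub ℓ Lˣ k := Subgroup.mem_iInf.mp hx
  set b := (p ^ 2) ^ Module.finrank ℚ_[p] L with hb
  obtain ⟨z, hz⟩ := hxk b
  rw [powMonoidHom_apply] at hz
  have hzord : orderOf z = ℓ ^ (b + 1) := by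
    have h1 : z ^ ℓ ^ (b + 1) = 1 := by rw [pow_succ, pow_mul, hz, hxℓ]
    obtain ⟨t, htb, ht⟩ := (Nat.dvd_prime_pow hℓ).mp (orderOf_dvd_of_pow_eq_one h1)
    rcases Nat.lt_or_ge t (b + 1) with hlt | hge
    · exfalso
      have : z ^ ℓ ^ b = 1 := by
        have : orderOf z ∣ ℓ ^ b := ht ▸ pow_dvd_pow ℓ (by omega)
        exact orderOf_dvd_iff_pow_eq_one.mp this
      rw [hz] at this
      exact hx1 this
    · rw [ht]
      congr 1
      omega
  have hbound := order_bound (p := p) ℓ hℓ L z (b + 1) hzord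
  rw [← hb] at hbound
  have h2 : b < 2 ^ (b + 1) := by
    calc b < 2 ^ b := Nat.lt_two_pow_self
      _ ≤ 2 ^ (b + 1) := Nat.pow_le_pow_right (by norm_num) (by omega)
  have h3 : 2 ^ (b + 1) ≤ ℓ ^ (b + 1) := Nat.pow_le_pow_left hℓ.two_le _
  omega

end DivTorsion

/-- Let `L/K` be a cyclic Galois extension of `ℓ`-power degree of a finite
extension `K` of `ℚ_p`, with Galois group `G`, and let `D = ⋂_k (L^×)^{ℓ^k}` be the
`ℓ`-divisible part of `L^×`.  Then `Ĥ⁰(G, D) = 1` and `Ĥ⁻¹(G, D) = 1`; in particular every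
element of `D` fixed by `G` is the norm of an element of `D`. -/
theorem statement4 (p ℓ : ℕ) [Fact (Nat.Prime p)] [Fact (Nat.Prime ℓ)]
    (K L : Type) [Field K] [Field L] [Algebra ℚ_[p] K] [FiniteDimensional ℚ_[p] K]
    [Algebra K L] [FiniteDimensional K L] [IsGalois K L] [IsCyclic (L ≃ₐ[K] L)]
    (hdeg : ∃ m : ℕ, Module.finrank K L = ℓ ^ m) :
    Nat.card (tateH0 (fun σ : L ≃ₐ[K] L => galDiv ℓ σ)) = 1 ∧
      Nat.card (tateHm1 (fun σ : L ≃ₐ[K] L => galDiv ℓ σ)) = 1 ∧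
      ∀ x : ↥(divPart ℓ L), (∀ σ : L ≃ₐ[K] L, galDiv ℓ σ x = x) →
        ∃ y : ↥(divPart ℓ L), mNorm (fun σ : L ≃ₐ[K] L => galDiv ℓ σ) y = x := by
  classical
  obtain ⟨m, hm⟩ := hdeg
  letI : Algebra ℚ_[p] L := ((algebraMap K L).comp (algebraMap ℚ_[p] K)).toAlgebra
  haveI : IsScalarTower ℚ_[p] K L := IsScalarTower.of_algebraMap_eq fun x => rfl
  haveI : FiniteDimensional ℚ_[p] L := Module.Finite.trans K L
  have hℓp : ℓ.Prime := Fact.out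
  set ρ := fun σ : L ≃ₐ[K] L => galDiv ℓ σ with hρ
  have hcard : Fintype.card (L ≃ₐ[K] L) = ℓ ^ m := by
    rw [← Nat.card_eq_fintype_card, IsGalois.card_aut_eq_finrank, hm]
  have hNapp : ∀ x : ↥(divPart ℓ L), mNorm ρ x = ∏ σ : L ≃ₐ[K] L, ρ σ x := fun x =>
    MonoidHom.finset_prod_apply ρ Finset.univ x
  have hdivM : ∀ x : ↥(divPart ℓ L), ∃ y, y ^ ℓ = x := by
    intro x
    obtain ⟨y, hyD, hy⟩ := divPart_div hℓp x.2
    exact ⟨⟨y, hyD⟩, Subtype.ext (by rw [SubmonoidClass.coe_pow]; exact hy)⟩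
  have htfM : ∀ x : ↥(divPart ℓ L), x ^ ℓ = 1 → x = 1 := by
    intro x hx
    have hx' : (x : Lˣ) ^ ℓ = 1 := by
      have := congrArg Subtype.val hx
      simpa using this
    exact Subtype.ext (divPart_torsion_free p hℓp x.2 hx')
  have huniq : ∀ a b : ↥(divPart ℓ L), a ^ ℓ = b ^ ℓ → a = b := by
    intro a b hab
    have h1 : (a / b) ^ ℓ = 1 := by rw [div_pow, hab, div_self']
    exact div_eq_one.mp (htfM _ h1)
  have hdivFix : ∀ x : ↥(divPart ℓ L), (∀ σ, ρ σ x = x) →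
      ∃ y, (∀ σ, ρ σ y = y) ∧ y ^ ℓ = x := by
    intro x hx
    obtain ⟨y, hy⟩ := hdivM x
    refine ⟨y, fun σ => huniq _ _ ?_, hy⟩
    rw [← map_pow, hy, hx σ]
  have hdivKer : ∀ x : ↥(divPart ℓ L), mNorm ρ x = 1 →
      ∃ y, mNorm ρ y = 1 ∧ y ^ ℓ = x := by
    intro x hx
    obtain ⟨y, hy⟩ := hdivM x
    refine ⟨y, ?_, hy⟩
    apply htfM
    rw [← map_pow, hy, hx]
  have hfixnorm : ∀ x : ↥(divPart ℓ L), (∀ σ, ρ σ x = x) → mNorm ρ x = x ^ ℓ ^ m := by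
    intro x hx
    rw [hNapp, Finset.prod_congr rfl fun σ _ => hx σ, Finset.prod_const,
      Finset.card_univ, hcard]
  have hnormclaim : ∀ x : ↥(divPart ℓ L), (∀ σ, ρ σ x = x) → ∃ y, mNorm ρ y = x := by
    intro x hx
    obtain ⟨y, hyfix, hy⟩ := iter_root_pred hdivFix m x hx
    exact ⟨y, by rw [hfixnorm y hyfix, hy]⟩
  have haug : ∀ y : ↥(divPart ℓ L), mNorm ρ y = 1 → y ^ ℓ ^ m ∈ mAug ρ := by
    intro y hy
    have hcomp : y ^ ℓ ^ m = ∏ σ : L ≃ₐ[K] L, (ρ σ y * y⁻¹)⁻¹ := by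
      symm
      calc ∏ σ : L ≃ₐ[K] L, (ρ σ y * y⁻¹)⁻¹
          = (∏ σ : L ≃ₐ[K] L, (ρ σ y * y⁻¹))⁻¹ := Finset.prod_inv_distrib _
        _ = ((∏ σ : L ≃ₐ[K] L, ρ σ y) * ∏ _σ : L ≃ₐ[K] L, y⁻¹)⁻¹ := by
            rw [Finset.prod_mul_distrib]
        _ = (mNorm ρ y * (y⁻¹) ^ Fintype.card (L ≃ₐ[K] L))⁻¹ := by
            rw [hNapp, Finset.prod_const, Finset.card_univ]
        _ = y ^ ℓ ^ m := by rw [hy, one_mul, inv_pow, inv_inv, hcard]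
    rw [hcomp]
    exact Subgroup.prod_mem _ fun σ _ =>
      (mAug ρ).inv_mem (Subgroup.subset_closure ⟨σ, y, rfl⟩)
  refine ⟨?_, ?_, fun x hx => hnormclaim x hx⟩
  · show Nat.card
      (↥(mFixed ρ) ⧸ ((mNorm ρ).range.subgroupOf (mFixed ρ))) = 1
    have hall : ∀ q : ↥(mFixed ρ) ⧸ ((mNorm ρ).range.subgroupOf (mFixed ρ)), q = 1 := by
      intro q
      refine QuotientGroup.induction_on q fun z => ?_
      rw [QuotientGroup.eq_one_iff, Subgroup.mem_subgroupOf]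
      obtain ⟨y, hy⟩ := hnormclaim z.1 fun σ => z.2 σ
      exact ⟨y, hy⟩
    haveI : Subsingleton
        (↥(mFixed ρ) ⧸ ((mNorm ρ).range.subgroupOf (mFixed ρ))) :=
      ⟨fun a b => (hall a).trans (hall b).symm⟩
    rw [Nat.card_eq_one_iff_unique]
    exact ⟨inferInstance, ⟨1⟩⟩
  · show Nat.card
      (↥(mNorm ρ).ker ⧸ ((mAug ρ).subgroupOf (mNorm ρ).ker)) = 1
    have hall : ∀ q : ↥(mNorm ρ).ker ⧸ ((mAug ρ).subgroupOf (mNorm ρ).ker), q = 1 := by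
      intro q
      refine QuotientGroup.induction_on q fun z => ?_
      rw [QuotientGroup.eq_one_iff, Subgroup.mem_subgroupOf]
      obtain ⟨y, hy1, hy2⟩ := iter_root_pred hdivKer m z.1 (MonoidHom.mem_ker.mp z.2)
      rw [← hy2]
      exact haug y hy1
    haveI : Subsingleton
        (↥(mNorm ρ).ker ⧸ ((mAug ρ).subgroupOf (mNorm ρ).ker)) :=
      ⟨fun a b => (hall a).trans (hall b).symm⟩
    rw [Nat.card_eq_one_iff_unique]
    exact ⟨inferInstance, ⟨1⟩⟩
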